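/- Let V be a complex Hilbert space and M a bounded normal operator on V (M M† = M† M). Set A := (M + M†)/2 and B := (M − M†)/(2i). Let p, q be real polynomials and let S₁, S₂ be bounded operators on V such that p(A) = S₁ (p(A) + q(B)) and q(B) = S₂ (p(A) + q(B)). Then {z ∈ ℂ : |p(Re z)| > ‖S₁‖ · |p(Re z) + q(Im z)|} is contained in the resolvent set of M, and {z ∈ ℂ : |q(Im z)| > ‖S₂‖ · |p(Re z) + q(Im z)|} is contained in the resolvent set of M. -/

import Mathlib

open ContinuousLinearMap

section Aux


open ContinuousLinearMap




variable {V : Type*} [NormedAddCommGroup V] [InnerProductSpace ℂ V] [CompleteSpace V]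

/-- For a normal operator, `‖N† x‖ = ‖N x‖`. -/
lemma norm_adjoint_apply_eq {N : V →L[ℂ] V} (h : N ∘L adjoint N = adjoint N ∘L N) (x : V) :
    ‖adjoint N x‖ = ‖N x‖ := by
  have h1 : ‖N x‖ ^ 2 = RCLike.re (inner ℂ ((adjoint N ∘L N) x) x : ℂ) :=
    apply_norm_sq_eq_inner_adjoint_left N x
  have h2 : ‖adjoint N x‖ ^ 2 = RCLike.re (inner ℂ ((adjoint (adjoint N) ∘L adjoint N) x) x : ℂ) :=
    apply_norm_sq_eq_inner_adjoint_left (adjoint N) x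
  rw [adjoint_adjoint, h] at h2
  have hsq : ‖adjoint N x‖ ^ 2 = ‖N x‖ ^ 2 := by rw [h1, h2]
  have := congrArg Real.sqrt hsq
  rwa [Real.sqrt_sq (norm_nonneg _), Real.sqrt_sq (norm_nonneg _)] at this

/-- A non-invertible normal operator has approximate kernel vectors. -/
lemma approx_ker {N : V →L[ℂ] V} (hn : N ∘L adjoint N = adjoint N ∘L N) (h : ¬ IsUnit N) :
    ∀ ε > (0:ℝ), ∃ x : V, ‖x‖ = 1 ∧ ‖N x‖ ≤ ε := by
  by_contra hc
  push_neg at hc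
  obtain ⟨ε, hε, hbd⟩ := hc
  have hbd' : ∀ x : V, ‖x‖ ≤ ε⁻¹ * ‖N x‖ := by
    intro x
    rcases eq_or_ne x 0 with rfl | hx
    · simp
    · have hnx : ‖x‖ ≠ 0 := norm_ne_zero_iff.mpr hx
      have h1 : ‖((‖x‖⁻¹ : ℂ) • x : V)‖ = 1 := by
        rw [norm_smul]
        simp [hnx]
      have h2 := le_of_lt (hbd _ h1)
      rw [map_smul, norm_smul] at h2
      simp only [norm_inv, Complex.norm_real, norm_norm, Real.norm_eq_abs,
        abs_norm] at h2
      rw [le_inv_mul_iff₀ hε]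
      calc ε * ‖x‖ ≤ (‖x‖⁻¹ * ‖N x‖) * ‖x‖ := by
            exact mul_le_mul_of_nonneg_right h2 (norm_nonneg x)
        _ = ‖N x‖ := by field_simp
  have hanti : AntilipschitzWith (⟨ε, le_of_lt hε⟩)⁻¹ N := by
    apply N.antilipschitz_of_bound
    intro x
    exact hbd' x
  have hinj : LinearMap.ker (N : V →ₗ[ℂ] V) = ⊥ := LinearMap.ker_eq_bot.mpr hanti.injective
  have hclosed : IsClosed (Set.range N) := hanti.isClosed_range N.uniformContinuous
  have hclosed' : IsClosed ((LinearMap.range (N : V →ₗ[ℂ] V) : Submodule ℂ V) : Set V) := by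
    rwa [LinearMap.coe_range]
  haveI : CompleteSpace (LinearMap.range (N : V →ₗ[ℂ] V)) := hclosed'.completeSpace_coe
  have hsurj : LinearMap.range (N : V →ₗ[ℂ] V) = ⊤ := by
    rw [← Submodule.orthogonal_eq_bot_iff, Submodule.eq_bot_iff]
    intro x hx
    have hadj : adjoint N x = 0 := by
      apply ext_inner_left ℂ
      intro v
      rw [adjoint_inner_right]
      simp only [inner_zero_right]
      exact hx (N v) (LinearMap.mem_range_self _ v)
    have hNx : ‖N x‖ = 0 := by rw [← norm_adjoint_apply_eq hn, hadj, norm_zero]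
    have := hbd' x
    rw [hNx, mul_zero] at this
    exact norm_le_zero_iff.mp this
  let e := ContinuousLinearEquiv.ofBijective N hinj hsurj
  apply h
  refine ⟨⟨N, (e.symm : V →L[ℂ] V), ?_, ?_⟩, rfl⟩
  · ext x
    have : N (e.symm x) = e (e.symm x) := rfl
    simp [ContinuousLinearMap.mul_apply, this]
  · ext x
    have : N x = e x := rfl
    simp [ContinuousLinearMap.mul_apply, this]

lemma poly_approx (T : V →L[ℂ] V) (P : Polynomial ℂ) (c : ℂ) :
    ∃ C : ℝ, 0 ≤ C ∧ ∀ x : V, ‖Polynomial.aeval T P x - P.eval c • x‖ ≤ C * ‖T x - c • x‖ := by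
  obtain ⟨r, hr⟩ := Polynomial.X_sub_C_dvd_sub_C_eval (a := c) (p := P)
  rw [mul_comm] at hr
  refine ⟨‖Polynomial.aeval T r‖, norm_nonneg _, fun x => ?_⟩
  have h1 : Polynomial.aeval T P x - P.eval c • x
      = Polynomial.aeval T r (T x - c • x) := by
    have h2 : Polynomial.aeval T (P - Polynomial.C (P.eval c))
        = Polynomial.aeval T r * (T - c • (1 : V →L[ℂ] V)) := by
      rw [hr, map_mul]
      congr 1
      simp [Algebra.algebraMap_eq_smul_one]
    have h3 := congrArg (fun (f : V →L[ℂ] V) => f x) h2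
    simp only [map_sub, Polynomial.aeval_C, ContinuousLinearMap.sub_apply,
      ContinuousLinearMap.mul_apply, ContinuousLinearMap.smul_apply,
      ContinuousLinearMap.one_apply, Algebra.algebraMap_eq_smul_one] at h3
    simpa using h3
  rw [h1]
  exact (Polynomial.aeval T r).le_opNorm _

lemma abs_le_of_approx {T R S : V →L[ℂ] V} {c d : ℝ} (hS : T = S ∘L R)
    (h : ∀ ε > (0:ℝ), ∃ x : V, ‖x‖ = 1 ∧ ‖T x - (c:ℂ) • x‖ ≤ ε ∧ ‖R x - (d:ℂ) • x‖ ≤ ε) :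
    |c| ≤ ‖S‖ * |d| := by
  apply le_of_forall_pos_le_add
  intro ε hε
  have hδ : (0:ℝ) < ε / (‖S‖ + 2) := by positivity
  obtain ⟨x, hx1, hT, hR⟩ := h _ hδ
  set δ := ε / (‖S‖ + 2)
  have hcx : ‖(c:ℂ) • x‖ = |c| := by
    rw [norm_smul, hx1, mul_one, Complex.norm_real, Real.norm_eq_abs]
  have hdx : ‖(d:ℂ) • x‖ = |d| := by
    rw [norm_smul, hx1, mul_one, Complex.norm_real, Real.norm_eq_abs]
  have h1 : |c| ≤ ‖T x‖ + δ := by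
    calc |c| = ‖(c:ℂ) • x‖ := hcx.symm
      _ = ‖T x - (T x - (c:ℂ) • x)‖ := by rw [sub_sub_cancel]
      _ ≤ ‖T x‖ + ‖T x - (c:ℂ) • x‖ := norm_sub_le _ _
      _ ≤ ‖T x‖ + δ := by linarith
  have h2 : ‖R x‖ ≤ |d| + δ := by
    calc ‖R x‖ = ‖(d:ℂ) • x + (R x - (d:ℂ) • x)‖ := by congr 1; abel
      _ ≤ ‖(d:ℂ) • x‖ + ‖R x - (d:ℂ) • x‖ := norm_add_le _ _
      _ ≤ |d| + δ := by rw [hdx]; linarith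
  have h3 : ‖T x‖ ≤ ‖S‖ * ‖R x‖ := by
    have hTx : T x = S (R x) := by rw [hS]; rfl
    rw [hTx]
    exact S.le_opNorm _
  have hSn : (0:ℝ) ≤ ‖S‖ := norm_nonneg _
  have hδε : (‖S‖ + 2) * δ = ε := by
    rw [mul_comm]
    exact div_mul_cancel₀ ε (by positivity)
  nlinarith [mul_le_mul_of_nonneg_left h2 hSn]

lemma key {M A B : V →L[ℂ] V} (hM : M ∘L adjoint M = adjoint M ∘L M)
    (hA : A = (2 : ℂ)⁻¹ • (M + adjoint M)) (hB : B = (2 * Complex.I)⁻¹ • (M - adjoint M))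
    {z : ℂ} (hz : z ∉ resolventSet ℂ M) :
    ∀ ε > (0:ℝ), ∃ x : V, ‖x‖ = 1 ∧ ‖A x - (z.re : ℂ) • x‖ ≤ ε ∧ ‖B x - (z.im : ℂ) • x‖ ≤ ε := by
  set N : V →L[ℂ] V := algebraMap ℂ (V →L[ℂ] V) z - M with hN
  have hu : ¬ IsUnit N := by
    intro hunit
    exact hz (by rwa [resolventSet, Set.mem_setOf_eq])
  have hadjN : adjoint N = algebraMap ℂ (V →L[ℂ] V) (starRingEnd ℂ z) - adjoint M := by
    rw [← star_eq_adjoint, hN, star_sub, ← algebraMap_star_comm, star_eq_adjoint]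
    rfl
  have hM' : M * adjoint M = adjoint M * M := hM
  have hNn : N ∘L adjoint N = adjoint N ∘L N := by
    show N * adjoint N = adjoint N * N
    rw [hadjN, hN]
    set a := algebraMap ℂ (V →L[ℂ] V) z
    set a' := algebraMap ℂ (V →L[ℂ] V) (starRingEnd ℂ z)
    calc (a - M) * (a' - adjoint M)
        = a * a' - a * adjoint M - M * a' + M * adjoint M := by noncomm_ring
      _ = a' * a - adjoint M * a - a' * M + adjoint M * M := by
          rw [Algebra.commutes z a', Algebra.commutes z (adjoint M),
            ← Algebra.commutes (starRingEnd ℂ z) M, hM']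
      _ = (a' - adjoint M) * (a - M) := by noncomm_ring
  intro ε hε
  obtain ⟨x, hx1, hNx⟩ := approx_ker hNn hu ε hε
  have hadjx : ‖adjoint N x‖ ≤ ε := by rw [norm_adjoint_apply_eq hNn]; exact hNx
  have hNxv : N x = z • x - M x := by
    simp [hN, Algebra.algebraMap_eq_smul_one]
  have hadjxv : adjoint N x = (starRingEnd ℂ z) • x - adjoint M x := by
    simp [hadjN, Algebra.algebraMap_eq_smul_one]
  refine ⟨x, hx1, ?_, ?_⟩
  · have idA : A x - (z.re : ℂ) • x = -((2:ℂ)⁻¹ • (N x + adjoint N x)) := by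
      have hre : ((z.re : ℝ) : ℂ) = 2⁻¹ * (z + starRingEnd ℂ z) := by
        rw [Complex.add_conj]; push_cast; ring
      rw [hre, hA, hNxv, hadjxv]
      simp only [ContinuousLinearMap.smul_apply, ContinuousLinearMap.add_apply]
      module
    rw [idA, norm_neg, norm_smul]
    have : ‖(2:ℂ)⁻¹‖ = 2⁻¹ := by simp
    rw [this]
    calc (2⁻¹ : ℝ) * ‖N x + adjoint N x‖ ≤ 2⁻¹ * (‖N x‖ + ‖adjoint N x‖) := by
          have := norm_add_le (N x) (adjoint N x)
          linarith
      _ ≤ ε := by linarith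
  · have idB : B x - (z.im : ℂ) • x = -((2 * Complex.I)⁻¹ • (N x - adjoint N x)) := by
      have him : ((z.im : ℝ) : ℂ) = (2 * Complex.I)⁻¹ * (z - starRingEnd ℂ z) := by
        rw [Complex.sub_conj]
        field_simp
        push_cast
        ring
      rw [him, hB, hNxv, hadjxv]
      simp only [ContinuousLinearMap.smul_apply, ContinuousLinearMap.sub_apply]
      module
    rw [idB, norm_neg, norm_smul]
    have h2I : ‖(2 * Complex.I)⁻¹‖ = 2⁻¹ := by
      simp [norm_inv, Complex.norm_I]
    rw [h2I]
    calc (2⁻¹ : ℝ) * ‖N x - adjoint N x‖ ≤ 2⁻¹ * (‖N x‖ + ‖adjoint N x‖) := by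
          have := norm_sub_le (N x) (adjoint N x)
          linarith
      _ ≤ ε := by linarith


end Aux

/-- Let `M` be a bounded normal operator on a complex Hilbert space with real
part `A` and imaginary part `B`, let `p, q` be real polynomials and `S₁, S₂` bounded operators
with `p(A) = S₁ (p(A) + q(B))` and `q(B) = S₂ (p(A) + q(B))`. Then
`{z : |p(Re z)| > ‖S₁‖·|p(Re z) + q(Im z)|}` and `{z : |q(Im z)| > ‖S₂‖·|p(Re z) + q(Im z)|}`
are contained in the resolvent set of `M`. -/
theorem stmt_5
    {V : Type*} [NormedAddCommGroup V] [InnerProductSpace ℂ V] [CompleteSpace V]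
    (M : V →L[ℂ] V) (hM : M ∘L adjoint M = adjoint M ∘L M)
    (A B : V →L[ℂ] V)
    (hA : A = (2 : ℂ)⁻¹ • (M + adjoint M))
    (hB : B = (2 * Complex.I)⁻¹ • (M - adjoint M))
    (p q : Polynomial ℝ) (S₁ S₂ : V →L[ℂ] V)
    (hS₁ : Polynomial.aeval A (p.map (algebraMap ℝ ℂ)) =
      S₁ ∘L (Polynomial.aeval A (p.map (algebraMap ℝ ℂ)) +
        Polynomial.aeval B (q.map (algebraMap ℝ ℂ))))
    (hS₂ : Polynomial.aeval B (q.map (algebraMap ℝ ℂ)) =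
      S₂ ∘L (Polynomial.aeval A (p.map (algebraMap ℝ ℂ)) +
        Polynomial.aeval B (q.map (algebraMap ℝ ℂ)))) :
    {z : ℂ | |p.eval z.re| > ‖S₁‖ * |p.eval z.re + q.eval z.im|} ⊆ resolventSet ℂ M ∧
    {z : ℂ | |q.eval z.im| > ‖S₂‖ * |p.eval z.re + q.eval z.im|} ⊆ resolventSet ℂ M := by
  
  have main : ∀ z : ℂ, z ∉ resolventSet ℂ M →
      |p.eval z.re| ≤ ‖S₁‖ * |p.eval z.re + q.eval z.im| ∧
      |q.eval z.im| ≤ ‖S₂‖ * |p.eval z.re + q.eval z.im| := by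
    intro z hres
    have hkey := key hM hA hB hres
    obtain ⟨Cp, hCp0, hCp⟩ := poly_approx A (p.map (algebraMap ℝ ℂ)) (z.re : ℂ)
    obtain ⟨Cq, hCq0, hCq⟩ := poly_approx B (q.map (algebraMap ℝ ℂ)) (z.im : ℂ)
    have hPe : (p.map (algebraMap ℝ ℂ)).eval ((z.re : ℝ) : ℂ) = ((p.eval z.re : ℝ) : ℂ) := by
      rw [Polynomial.eval_map]
      exact Polynomial.eval₂_at_apply (algebraMap ℝ ℂ) z.re
    have hQe : (q.map (algebraMap ℝ ℂ)).eval ((z.im : ℝ) : ℂ) = ((q.eval z.im : ℝ) : ℂ) := by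
      rw [Polynomial.eval_map]
      exact Polynomial.eval₂_at_apply (algebraMap ℝ ℂ) z.im
    have happrox : ∀ ε > (0:ℝ), ∃ x : V, ‖x‖ = 1 ∧
        ‖Polynomial.aeval A (p.map (algebraMap ℝ ℂ)) x - ((p.eval z.re : ℝ) : ℂ) • x‖ ≤ ε ∧
        ‖Polynomial.aeval B (q.map (algebraMap ℝ ℂ)) x - ((q.eval z.im : ℝ) : ℂ) • x‖ ≤ ε := by
      intro ε hε
      have hδ : (0:ℝ) < ε / (Cp + Cq + 1) := by positivity
      obtain ⟨x, hx1, hAx, hBx⟩ := hkey _ hδ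
      set δ := ε / (Cp + Cq + 1) with hδdef
      have hδε : (Cp + Cq + 1) * δ = ε := by
        rw [hδdef, mul_comm]
        exact div_mul_cancel₀ ε (by positivity)
      refine ⟨x, hx1, ?_, ?_⟩
      · calc ‖Polynomial.aeval A (p.map (algebraMap ℝ ℂ)) x - ((p.eval z.re : ℝ) : ℂ) • x‖
            = ‖Polynomial.aeval A (p.map (algebraMap ℝ ℂ)) x
                - (p.map (algebraMap ℝ ℂ)).eval ((z.re : ℝ) : ℂ) • x‖ := by rw [hPe]
          _ ≤ Cp * ‖A x - (z.re : ℂ) • x‖ := hCp x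
          _ ≤ Cp * δ := by
              exact mul_le_mul_of_nonneg_left hAx hCp0
          _ ≤ ε := by nlinarith
      · calc ‖Polynomial.aeval B (q.map (algebraMap ℝ ℂ)) x - ((q.eval z.im : ℝ) : ℂ) • x‖
            = ‖Polynomial.aeval B (q.map (algebraMap ℝ ℂ)) x
                - (q.map (algebraMap ℝ ℂ)).eval ((z.im : ℝ) : ℂ) • x‖ := by rw [hQe]
          _ ≤ Cq * ‖B x - (z.im : ℂ) • x‖ := hCq x
          _ ≤ Cq * δ := mul_le_mul_of_nonneg_left hBx hCq0
          _ ≤ ε := by nlinarith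
    have hsum : ∀ ε > (0:ℝ), ∃ x : V, ‖x‖ = 1 ∧
        ‖Polynomial.aeval A (p.map (algebraMap ℝ ℂ)) x - ((p.eval z.re : ℝ) : ℂ) • x‖ ≤ ε ∧
        ‖(Polynomial.aeval A (p.map (algebraMap ℝ ℂ)) +
          Polynomial.aeval B (q.map (algebraMap ℝ ℂ))) x
          - ((p.eval z.re + q.eval z.im : ℝ) : ℂ) • x‖ ≤ ε := by
      intro ε hε
      obtain ⟨x, hx1, h1, h2⟩ := happrox (ε/2) (by positivity)
      refine ⟨x, hx1, by linarith, ?_⟩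
      have hid : (Polynomial.aeval A (p.map (algebraMap ℝ ℂ)) +
          Polynomial.aeval B (q.map (algebraMap ℝ ℂ))) x
          - ((p.eval z.re + q.eval z.im : ℝ) : ℂ) • x
          = (Polynomial.aeval A (p.map (algebraMap ℝ ℂ)) x - ((p.eval z.re : ℝ) : ℂ) • x)
          + (Polynomial.aeval B (q.map (algebraMap ℝ ℂ)) x - ((q.eval z.im : ℝ) : ℂ) • x) := by
        push_cast
        simp only [ContinuousLinearMap.add_apply, Pi.add_apply, add_smul]
        abel
      rw [hid]
      calc ‖_ + _‖ ≤ _ + _ := norm_add_le _ _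
        _ ≤ ε/2 + ε/2 := add_le_add h1 h2
        _ = ε := by ring
    have hsum' : ∀ ε > (0:ℝ), ∃ x : V, ‖x‖ = 1 ∧
        ‖Polynomial.aeval B (q.map (algebraMap ℝ ℂ)) x - ((q.eval z.im : ℝ) : ℂ) • x‖ ≤ ε ∧
        ‖(Polynomial.aeval A (p.map (algebraMap ℝ ℂ)) +
          Polynomial.aeval B (q.map (algebraMap ℝ ℂ))) x
          - ((p.eval z.re + q.eval z.im : ℝ) : ℂ) • x‖ ≤ ε := by
      intro ε hε
      obtain ⟨x, hx1, h1, h2⟩ := happrox (ε/2) (by positivity)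
      refine ⟨x, hx1, by linarith, ?_⟩
      have hid : (Polynomial.aeval A (p.map (algebraMap ℝ ℂ)) +
          Polynomial.aeval B (q.map (algebraMap ℝ ℂ))) x
          - ((p.eval z.re + q.eval z.im : ℝ) : ℂ) • x
          = (Polynomial.aeval A (p.map (algebraMap ℝ ℂ)) x - ((p.eval z.re : ℝ) : ℂ) • x)
          + (Polynomial.aeval B (q.map (algebraMap ℝ ℂ)) x - ((q.eval z.im : ℝ) : ℂ) • x) := by
        push_cast
        simp only [ContinuousLinearMap.add_apply, Pi.add_apply, add_smul]
        abel
      rw [hid]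
      calc ‖_ + _‖ ≤ _ + _ := norm_add_le _ _
        _ ≤ ε/2 + ε/2 := add_le_add h1 h2
        _ = ε := by ring
    exact ⟨abs_le_of_approx hS₁ hsum, abs_le_of_approx hS₂ hsum'⟩
  constructor
  · intro z hz
    by_contra hres
    exact absurd (main z hres).1 (not_le.mpr hz)
  · intro z hz
    by_contra hres
    exact absurd (main z hres).2 (not_le.mpr hz)
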